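/- Let q, q⁺, q⁻ be nonnegative real numbers, let z, w ∈ ℂ, and let ε' ≥ 0 and ε_tsp ≥ 0. Suppose |√q − |z|| ≤ ε'/3, |√(q⁺) − |z + w|/2| ≤ ε'/3, |√(q⁻) − |z − w|/2| ≤ ε'/3, and |w − √q| ≤ ε_tsp. Define ã = 0 if √q ≤ (2/3)·ε' + ε_tsp, and otherwise ã = max(−√q, min(√q, (q⁺ − q⁻)/√q)). Then |ã − Re(z)| ≤ ε' + ε_tsp + |Im(z)|. -/

import Mathlib

set_option maxHeartbeats 1000000 in
lemma tomo_key_lemma (q qp qm : ℝ) (hqp : 0 ≤ qp) (hqm : 0 ≤ qm)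
    (z w : ℂ) (ε' εtsp : ℝ) (hε' : 0 ≤ ε') (htsp : 0 ≤ εtsp)
    (h1 : |Real.sqrt q - ‖z‖| ≤ ε' / 3)
    (h2 : |Real.sqrt qp - ‖z + w‖ / 2| ≤ ε' / 3)
    (h3 : |Real.sqrt qm - ‖z - w‖ / 2| ≤ ε' / 3)
    (h4 : ‖w - (Real.sqrt q : ℂ)‖ ≤ εtsp)
    (hr : 2 / 3 * ε' + εtsp < Real.sqrt q) :
    Real.sqrt q - z.re ≤ ε' + εtsp + |z.im| ∨
      qp - qm ≤ Real.sqrt q * (z.re + (ε' + εtsp + |z.im|)) := by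
  by_cases hcase : Real.sqrt q - z.re ≤ ε' + εtsp + |z.im|
  · exact Or.inl hcase
  right
  push_neg at hcase
  set r := Real.sqrt q with hrdef
  have hr0 : 0 ≤ r := Real.sqrt_nonneg q
  set e : ℝ := ε' / 3 with hedef
  set d : ℝ := ‖w - (r : ℂ)‖ with hddef
  set m : ℝ := |z.im| with hmdef
  have hmnn : 0 ≤ m := abs_nonneg _
  have henn : 0 ≤ e := by positivity
  have hdnn : 0 ≤ d := norm_nonneg _
  have hd : d ≤ εtsp := h4
  set U : ℝ := ‖z + (r : ℂ)‖ / 2 with hUdef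
  set V : ℝ := ‖z - (r : ℂ)‖ / 2 with hVdef
  have hUnn : 0 ≤ U := by positivity
  have hVnn : 0 ≤ V := by positivity
  set E : ℝ := e + d / 2 with hEdef
  -- triangle inequalities
  have huw : ‖z + w‖ ≤ ‖z + (r : ℂ)‖ + d := by
    have h : z + w = (z + (r : ℂ)) + (w - (r : ℂ)) := by ring
    rw [h]; exact norm_add_le _ _
  have hvw : ‖z - (r : ℂ)‖ ≤ ‖z - w‖ + d := by
    have h : z - (r : ℂ) = (z - w) + (w - (r : ℂ)) := by ring
    rw [h]; exact norm_add_le _ _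
  -- bounds on sqrt qp, sqrt qm
  have hb : Real.sqrt qp ≤ U + E := by
    have := (abs_le.mp h2).2
    have := (abs_le.mp h2).1
    simp only [hUdef, hEdef]
    linarith
  have hc : V - E ≤ Real.sqrt qm := by
    have := (abs_le.mp h3).1
    simp only [hVdef, hEdef]
    linarith
  -- V ≥ E from the case hypothesis
  have hreabs : |(z - (r : ℂ)).re| ≤ ‖z - (r : ℂ)‖ := Complex.abs_re_le_norm _
  have hzr_re : (z - (r : ℂ)).re = z.re - r := by simp
  have hVE : E ≤ V := by
    rw [hzr_re] at hreabs
    have h1' : r - z.re ≤ |z.re - r| := by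
      rw [abs_sub_comm]; exact le_abs_self _
    simp only [hVdef, hEdef]
    have : ε' + εtsp + m < r - z.re := hcase
    linarith
  have hqpb : qp ≤ (U + E) ^ 2 := by
    have h0 := pow_le_pow_left₀ (Real.sqrt_nonneg qp) hb 2
    rwa [Real.sq_sqrt hqp] at h0
  have hqmc : (V - E) ^ 2 ≤ qm := by
    have h0 := pow_le_pow_left₀ (by linarith : (0:ℝ) ≤ V - E) hc 2
    rwa [Real.sq_sqrt hqm] at h0
  -- the key identity U^2 - V^2 = z.re * r
  have e1 : ‖z + (r : ℂ)‖ ^ 2 = (z.re + r) ^ 2 + z.im ^ 2 := by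
    rw [Complex.sq_norm, Complex.normSq_apply]
    simp
    ring
  have e2 : ‖z - (r : ℂ)‖ ^ 2 = (z.re - r) ^ 2 + z.im ^ 2 := by
    rw [Complex.sq_norm, Complex.normSq_apply]
    simp
    ring
  have hid : U ^ 2 - V ^ 2 = z.re * r := by
    have hU2 : U ^ 2 = ((z.re + r) ^ 2 + z.im ^ 2) / 4 := by
      rw [hUdef, div_pow, e1]; norm_num
    have hV2 : V ^ 2 = ((z.re - r) ^ 2 + z.im ^ 2) / 4 := by
      rw [hVdef, div_pow, e2]; norm_num
    rw [hU2, hV2]; ring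
  -- bound on U + V
  have habsz : ‖z‖ ≤ r + e := by
    have := (abs_le.mp h1).1
    simp only [hedef]; linarith
  have habsre : |z.re| ≤ r + e := le_trans (Complex.abs_re_le_norm z) habsz
  have hmax : |z.re + r| + |z.re - r| ≤ 2 * (r + e) := by
    rcases abs_le.mp habsre with ⟨hl, hu⟩
    rcases abs_cases (z.re + r) with ⟨h, _⟩ | ⟨h, _⟩ <;>
      rcases abs_cases (z.re - r) with ⟨h', _⟩ | ⟨h', _⟩ <;> linarith
  have hu0 : ‖z + (r : ℂ)‖ ≤ |z.re + r| + m := by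
    have := Complex.norm_le_abs_re_add_abs_im (z + (r : ℂ))
    simpa using this
  have hv0 : ‖z - (r : ℂ)‖ ≤ |z.re - r| + m := by
    have := Complex.norm_le_abs_re_add_abs_im (z - (r : ℂ))
    simpa using this
  have hUV : U + V ≤ r + e + m := by
    simp only [hUdef, hVdef]; linarith
  have hUVnn : 0 ≤ U + V := by linarith
  have h2E : 2 * E ≤ 2 * e + εtsp := by simp only [hEdef]; linarith
  have hEnn : 0 ≤ E := by positivity
  have hexp : (U + E) ^ 2 - (V - E) ^ 2 = (U ^ 2 - V ^ 2) + 2 * E * (U + V) := by ring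
  have step1 : qp - qm ≤ z.re * r + 2 * E * (U + V) := by linarith [hqpb, hqmc, hexp, hid]
  have step2 : 2 * E * (U + V) ≤ (2 * e + εtsp) * (U + V) :=
    mul_le_mul_of_nonneg_right h2E hUVnn
  have step3 : (2 * e + εtsp) * (U + V) ≤ (2 * e + εtsp) * (r + e + m) :=
    mul_le_mul_of_nonneg_left hUV (by linarith)
  have hr' : 2 * e + εtsp ≤ r := by
    have : 2 / 3 * ε' = 2 * e := by rw [hedef]; ring
    linarith
  have step4 : (2 * e + εtsp) * (e + m) ≤ r * (e + m) :=
    mul_le_mul_of_nonneg_right hr' (by linarith)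
  have hfin : ε' = 3 * e := by rw [hedef]; ring
  have hring1 : (2 * e + εtsp) * (r + e + m) =
      (2 * e + εtsp) * r + (2 * e + εtsp) * (e + m) := by ring
  have hring2 : r * (z.re + (ε' + εtsp + m)) =
      z.re * r + (2 * e + εtsp) * r + r * (e + m) := by rw [hfin]; ring
  linarith

/-- Per-coordinate accuracy bound for the sign-recovering tomography estimator. -/
theorem tomography_coordinate_bound
    (q qp qm : ℝ) (hq : 0 ≤ q) (hqp : 0 ≤ qp) (hqm : 0 ≤ qm)
    (z w : ℂ) (ε' εtsp : ℝ) (hε' : 0 ≤ ε') (htsp : 0 ≤ εtsp)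
    (h1 : |Real.sqrt q - ‖z‖| ≤ ε' / 3)
    (h2 : |Real.sqrt qp - ‖z + w‖ / 2| ≤ ε' / 3)
    (h3 : |Real.sqrt qm - ‖z - w‖ / 2| ≤ ε' / 3)
    (h4 : ‖w - (Real.sqrt q : ℂ)‖ ≤ εtsp)
    (atil : ℝ)
    (hatil : atil =
      if Real.sqrt q ≤ 2 / 3 * ε' + εtsp then 0
      else max (-Real.sqrt q) (min (Real.sqrt q) ((qp - qm) / Real.sqrt q))) :
    |atil - z.re| ≤ ε' + εtsp + |z.im| := by
  have habsre : |z.re| ≤ ‖z‖ := Complex.abs_re_le_norm z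
  have habsz : ‖z‖ ≤ Real.sqrt q + ε' / 3 := by
    have := (abs_le.mp h1).1; linarith
  have himnn : (0 : ℝ) ≤ |z.im| := abs_nonneg _
  by_cases hbr : Real.sqrt q ≤ 2 / 3 * ε' + εtsp
  · rw [hatil, if_pos hbr, zero_sub, abs_neg]
    rcases abs_le.mp habsre with ⟨hl, hu⟩
    rw [abs_le]
    constructor <;> linarith
  · push_neg at hbr
    rw [hatil, if_neg (not_le.mpr hbr)]
    have hr0 : 0 < Real.sqrt q := lt_of_le_of_lt (by positivity) hbr
    set r := Real.sqrt q with hrdef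
    set B : ℝ := ε' + εtsp + |z.im| with hBdef
    have hKL1 := tomo_key_lemma q qp qm hqp hqm z w ε' εtsp hε' htsp h1 h2 h3 h4 hbr
    have h2' : |Real.sqrt qm - ‖-z + w‖ / 2| ≤ ε' / 3 := by
      rw [show -z + w = -(z - w) by ring, norm_neg]; exact h3
    have h3' : |Real.sqrt qp - ‖-z - w‖ / 2| ≤ ε' / 3 := by
      rw [show -z - w = -(z + w) by ring, norm_neg]; exact h2
    have h1' : |Real.sqrt q - ‖-z‖| ≤ ε' / 3 := by
      rw [norm_neg]; exact h1
    have hKL2 := tomo_key_lemma q qm qp hqm hqp (-z) w ε' εtsp hε' htsp h1' h2' h3' h4 hbr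
    simp only [Complex.neg_re, Complex.neg_im, abs_neg] at hKL2
    rw [← hrdef] at hKL1 hKL2
    rcases abs_le.mp habsre with ⟨hl, hu⟩
    rw [abs_sub_le_iff]
    constructor
    · -- max (-r) (min r s) - z.re ≤ B
      rw [sub_le_iff_le_add]
      apply max_le
      · linarith
      · rcases hKL1 with h | h
        · exact le_trans (min_le_left _ _) (by linarith)
        · refine le_trans (min_le_right _ _) ?_
          rw [div_le_iff₀ hr0]
          linarith [h, (by rw [hBdef]; ring : (B + z.re) * r = r * (z.re + (ε' + εtsp + |z.im|)))]
    · -- z.re - max (-r) (min r s) ≤ B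
      rcases hKL2 with h | h
      · have hmx := le_max_left (-r) (min r ((qp - qm) / r))
        linarith
      · have hs : z.re - B ≤ (qp - qm) / r := by
          rw [le_div_iff₀ hr0]
          linarith [h, (by rw [hBdef]; ring : (z.re - B) * r = -(r * (-z.re + (ε' + εtsp + |z.im|))) + (qm - qp) + (qp - qm))]
        have hrB : z.re - B ≤ r := by linarith
        have hmin : z.re - B ≤ min r ((qp - qm) / r) := le_min hrB hs
        have hmx := le_trans hmin (le_max_right (-r) (min r ((qp - qm) / r)))
        linarith
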